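/- For an m-qubit GHZ state corrupted by the quantum depolarizing channel with noise strength p (where independently on each qubit, I is applied with probability 1-3p/4 and each of X, Y, Z with probability p/4), the fidelity with the original GHZ state equals Σ_{k even, 0≤k≤m} C(m,k) (p/4)^k (1-3p/4)^(m-k) + 2^(m-1) (p/4)^m. -/

import Mathlib

open Finset

/-- The Pauli matrices, indexed so that `0 ↦ I`, `1 ↦ X`, `2 ↦ Y`, `3 ↦ Z`. -/
noncomputable def pauli : Fin 4 → Matrix (Fin 2) (Fin 2) ℂ :=
  ![1, !![0, 1; 1, 0], !![0, -Complex.I; Complex.I, 0], !![1, 0; 0, -1]]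

/-- The `m`-qubit GHZ state `(|0⟩^⊗m + |1⟩^⊗m)/√2`, as a vector indexed by
bit strings `Fin m → Fin 2`. -/
noncomputable def ghz (m : ℕ) : (Fin m → Fin 2) → ℂ :=
  fun x => if x = (fun _ => 0) ∨ x = (fun _ => 1) then ((Real.sqrt 2)⁻¹ : ℝ) else 0

/-- Application of the tensor product `P_{e 0} ⊗ ⋯ ⊗ P_{e (m-1)}` of Pauli matrices
(one acting on each qubit) to an `m`-qubit state vector. -/
noncomputable def applyPauli {m : ℕ} (e : Fin m → Fin 4) (v : (Fin m → Fin 2) → ℂ) :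
    (Fin m → Fin 2) → ℂ :=
  fun x => ∑ y : Fin m → Fin 2, (∏ j, pauli (e j) (x j) (y j)) * v y

/-- The probability that a given qubit receives the Pauli error `k` in the depolarizing
channel of strength `p`: `1 - 3p/4` for `I` and `p/4` for each of `X`, `Y`, `Z`. -/
noncomputable def depProb (p : ℝ) (k : Fin 4) : ℝ := if k = 0 then 1 - 3 * p / 4 else p / 4

/-- Exchange a sum over `Fin m → Fin 4` of products with a power of a sum. -/
lemma aux_sum_fn_prod (m : ℕ) (g : Fin 4 → ℂ) :
    ∑ e : Fin m → Fin 4, ∏ j, g (e j) = (∑ k, g k) ^ m := by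
  have := Finset.prod_univ_sum (fun _ : Fin m => (univ : Finset (Fin 4))) (fun _ k => g k)
  simp only [Fintype.piFinset_univ] at this
  rw [← this, Finset.prod_const, Finset.card_univ, Fintype.card_fin]

/-- The GHZ overlap amplitude as a sum of four products of Pauli matrix entries. -/
lemma aux_amp (m : ℕ) (hm : 1 ≤ m) (e : Fin m → Fin 4) :
    dotProduct (star (ghz m)) (applyPauli e (ghz m)) =
      (1/2 : ℂ) * (∑ x : Fin 2, ∑ y : Fin 2, ∏ j, pauli (e j) x y) := by
  set c0 : Fin m → Fin 2 := fun _ => 0 with hc0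
  set c1 : Fin m → Fin 2 := fun _ => 1 with hc1
  have hne : c0 ≠ c1 := by
    intro h
    have := congrFun h ⟨0, hm⟩
    simp [hc0, hc1] at this
  have hg0 : ghz m c0 = ((Real.sqrt 2)⁻¹ : ℝ) := by simp [ghz, hc0]
  have hg1 : ghz m c1 = ((Real.sqrt 2)⁻¹ : ℝ) := by simp [ghz, hc1]
  have hsupp : ∀ x, x ≠ c0 → x ≠ c1 → ghz m x = 0 := by
    intro x h0 h1
    simp [ghz, hc0, hc1, h0, h1]
    exact ⟨h0, h1⟩
  have key : ∀ w : (Fin m → Fin 2) → ℂ,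
      ∑ x : Fin m → Fin 2, w x * ghz m x =
        (w c0 + w c1) * ((Real.sqrt 2)⁻¹ : ℝ) := by
    intro w
    rw [← Finset.sum_subset (Finset.subset_univ ({c0, c1} : Finset (Fin m → Fin 2)))]
    · rw [Finset.sum_pair hne, hg0, hg1]; ring
    · intro x _ hx
      simp only [Finset.mem_insert, Finset.mem_singleton, not_or] at hx
      rw [hsupp x hx.1 hx.2, mul_zero]
  have happ : ∀ x, applyPauli e (ghz m) x =
      ((∏ j, pauli (e j) (x j) 0) + (∏ j, pauli (e j) (x j) 1)) * ((Real.sqrt 2)⁻¹ : ℝ) := by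
    intro x
    rw [applyPauli, key (fun y => ∏ j, pauli (e j) (x j) (y j))]
  have hdot : dotProduct (star (ghz m)) (applyPauli e (ghz m)) =
      ∑ x : Fin m → Fin 2, applyPauli e (ghz m) x * ghz m x := by
    rw [dotProduct]
    congr 1
    ext x
    have : (star (ghz m)) x = (starRingEnd ℂ) (ghz m x) := rfl
    rw [this]
    by_cases h : x = c0 ∨ x = c1
    · rcases h with h | h <;> subst h <;>
        simp [hg0, hg1, mul_comm, Complex.conj_ofReal]
    · push_neg at h
      rw [hsupp x h.1 h.2]
      simp
  rw [hdot, key (fun x => applyPauli e (ghz m) x)]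
  rw [happ c0, happ c1]
  have hsC : (((Real.sqrt 2)⁻¹ : ℝ) : ℂ) * (((Real.sqrt 2)⁻¹ : ℝ) : ℂ) = (1/2 : ℂ) := by
    rw [← Complex.ofReal_mul, ← mul_inv, Real.mul_self_sqrt (by norm_num)]
    norm_num
  simp only [hc0, hc1, Fin.sum_univ_two]
  ring_nf
  ring_nf at hsC
  rw [hsC]
  ring

/-- Evaluation of the 16 scalar sums arising from exchanging sums and products. -/
lemma aux_total_sum (p : ℝ) (m : ℕ) (hm : 1 ≤ m) :
    ∑ u : Fin 2 × Fin 2, ∑ v : Fin 2 × Fin 2,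
      (∑ k : Fin 4, ((depProb p k : ℝ) : ℂ) * pauli k u.1 u.2 *
        (starRingEnd ℂ) (pauli k v.1 v.2)) ^ m =
    2 * (((1 - 3*p/4 : ℝ) : ℂ) + ((p/4 : ℝ) : ℂ)) ^ m
      + 2 * (((1 - 3*p/4 : ℝ) : ℂ) - ((p/4 : ℝ) : ℂ)) ^ m
      + 2 * (2 * ((p/4 : ℝ) : ℂ)) ^ m := by
  have hm' : m ≠ 0 := by omega
  simp [Fintype.sum_prod_type, Fin.sum_univ_two, Fin.sum_univ_four, pauli, depProb,
    Matrix.one_apply, Complex.conj_ofReal, Complex.I_mul_I, zero_pow hm']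
  ring_nf
  simp [Complex.I_sq, zero_pow hm']
  ring_nf
  simp only [one_div]

/-- The even-index part of the binomial expansion. -/
lemma aux_even_binom (m : ℕ) (a b : ℝ) :
    ∑ k ∈ (Finset.range (m + 1)).filter (fun k => Even k),
        (m.choose k : ℝ) * b ^ k * a ^ (m - k) = ((a + b) ^ m + (a - b) ^ m) / 2 := by
  have h1 : (a + b) ^ m = ∑ k ∈ Finset.range (m + 1),
      b ^ k * a ^ (m - k) * (m.choose k : ℝ) := by rw [add_comm a b, add_pow]
  have h2 : (a - b) ^ m = ∑ k ∈ Finset.range (m + 1),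
      (-b) ^ k * a ^ (m - k) * (m.choose k : ℝ) := by
    rw [sub_eq_add_neg, add_comm, add_pow]
  rw [h1, h2, ← Finset.sum_add_distrib, Finset.sum_filter, Finset.sum_div]
  refine Finset.sum_congr rfl fun k _ => ?_
  rcases Nat.even_or_odd k with hk | hk
  · rw [if_pos hk, hk.neg_pow]; ring
  · rw [if_neg (Nat.not_even_iff_odd.mpr hk), hk.neg_pow]; ring

/-- Expanding the product of the amplitude with its conjugate. -/
lemma aux_expand (m : ℕ) (p : ℝ) (e : Fin m → Fin 4) :
    (∏ j, ((depProb p (e j) : ℝ) : ℂ)) *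
      (((1/2 : ℂ) * ∑ x : Fin 2, ∑ y : Fin 2, ∏ j, pauli (e j) x y) *
       (starRingEnd ℂ) ((1/2 : ℂ) * ∑ x : Fin 2, ∑ y : Fin 2, ∏ j, pauli (e j) x y)) =
    (1/4 : ℂ) * ∑ u : Fin 2 × Fin 2, ∑ v : Fin 2 × Fin 2,
      ∏ j, (((depProb p (e j) : ℝ) : ℂ) * pauli (e j) u.1 u.2 *
        (starRingEnd ℂ) (pauli (e j) v.1 v.2)) := by
  rw [← Fintype.sum_prod_type (f := fun u : Fin 2 × Fin 2 => ∏ j, pauli (e j) u.1 u.2)]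
  rw [map_mul, map_sum]
  simp only [map_prod]
  have h2 : (starRingEnd ℂ) (1/2 : ℂ) = 1/2 := by rw [map_div₀, map_one, Complex.conj_ofNat]
  rw [h2]
  have := Finset.sum_mul_sum (univ : Finset (Fin 2 × Fin 2)) (univ : Finset (Fin 2 × Fin 2))
    (fun u => ∏ j, pauli (e j) u.1 u.2)
    (fun v => ∏ j, (starRingEnd ℂ) (pauli (e j) v.1 v.2))
  calc (∏ j, ((depProb p (e j) : ℝ) : ℂ)) *
      (((1/2 : ℂ) * ∑ u : Fin 2 × Fin 2, ∏ j, pauli (e j) u.1 u.2) *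
       ((1/2 : ℂ) * ∑ v : Fin 2 × Fin 2, ∏ j, (starRingEnd ℂ) (pauli (e j) v.1 v.2)))
      = (1/4 : ℂ) * ((∏ j, ((depProb p (e j) : ℝ) : ℂ)) *
        ((∑ u : Fin 2 × Fin 2, ∏ j, pauli (e j) u.1 u.2) *
         (∑ v : Fin 2 × Fin 2, ∏ j, (starRingEnd ℂ) (pauli (e j) v.1 v.2)))) := by ring
    _ = _ := by
        rw [this]
        simp only [Finset.mul_sum, Finset.prod_mul_distrib]
        refine Finset.sum_congr rfl fun u _ => Finset.sum_congr rfl fun v _ => ?_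
        ring

/-- For an `m`-qubit GHZ state corrupted by the quantum depolarizing channel with noise
strength `p` (independently on each qubit, `I` with probability `1 - 3p/4`, and each of
`X`, `Y`, `Z` with probability `p/4`), the fidelity with the original GHZ state equals
`∑_{k even, 0 ≤ k ≤ m} C(m,k) (p/4)^k (1 - 3p/4)^(m-k) + 2^(m-1) (p/4)^m`. -/
theorem depolarizing_ghz_fidelity (m : ℕ) (hm : 1 ≤ m) (p : ℝ) (hp0 : 0 ≤ p) (hp1 : p ≤ 1) :
    ∑ e : Fin m → Fin 4, (∏ j, depProb p (e j)) *
        Complex.normSq (dotProduct (star (ghz m)) (applyPauli e (ghz m))) =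
      (∑ k ∈ (Finset.range (m + 1)).filter (fun k => Even k),
          (m.choose k : ℝ) * (p / 4) ^ k * (1 - 3 * p / 4) ^ (m - k)) +
        2 ^ (m - 1) * (p / 4) ^ m := by
  set a : ℝ := 1 - 3 * p / 4 with ha
  set b : ℝ := p / 4 with hb
  -- real-side identity for the RHS
  have hpow : (2 * b) ^ m = 2 * (2 ^ (m - 1) * b ^ m) := by
    have h2 : (2:ℝ) ^ m = 2 ^ (m - 1) * 2 := by
      rw [← pow_succ]
      congr 1
      omega
    rw [mul_pow, h2]
    ring
  have hRHS : (∑ k ∈ (Finset.range (m + 1)).filter (fun k => Even k),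
          (m.choose k : ℝ) * b ^ k * a ^ (m - k)) + 2 ^ (m - 1) * b ^ m =
      ((a + b) ^ m + (a - b) ^ m) / 2 + (2 * b) ^ m / 2 := by
    rw [aux_even_binom m a b, hpow]
    ring
  apply Complex.ofReal_injective
  rw [hRHS]
  push_cast
  simp only [← Complex.mul_conj]
  calc ∑ e : Fin m → Fin 4, (∏ j, ((depProb p (e j) : ℝ) : ℂ)) *
        (dotProduct (star (ghz m)) (applyPauli e (ghz m)) *
          (starRingEnd ℂ) (dotProduct (star (ghz m)) (applyPauli e (ghz m))))
      = ∑ e : Fin m → Fin 4, (1/4 : ℂ) * ∑ u : Fin 2 × Fin 2, ∑ v : Fin 2 × Fin 2,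
          ∏ j, (((depProb p (e j) : ℝ) : ℂ) * pauli (e j) u.1 u.2 *
            (starRingEnd ℂ) (pauli (e j) v.1 v.2)) := by
        refine Finset.sum_congr rfl fun e _ => ?_
        rw [aux_amp m hm e, aux_expand m p e]
    _ = (1/4 : ℂ) * ∑ u : Fin 2 × Fin 2, ∑ v : Fin 2 × Fin 2,
          (∑ k : Fin 4, ((depProb p k : ℝ) : ℂ) * pauli k u.1 u.2 *
            (starRingEnd ℂ) (pauli k v.1 v.2)) ^ m := by
        rw [← Finset.mul_sum]
        congr 1
        rw [Finset.sum_comm]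
        refine Finset.sum_congr rfl fun u _ => ?_
        rw [Finset.sum_comm]
        refine Finset.sum_congr rfl fun v _ => ?_
        exact aux_sum_fn_prod m (fun k => ((depProb p k : ℝ) : ℂ) * pauli k u.1 u.2 *
          (starRingEnd ℂ) (pauli k v.1 v.2))
    _ = (1/4 : ℂ) * (2 * (((a : ℝ) : ℂ) + ((b : ℝ) : ℂ)) ^ m
          + 2 * (((a : ℝ) : ℂ) - ((b : ℝ) : ℂ)) ^ m
          + 2 * (2 * ((b : ℝ) : ℂ)) ^ m) := by
        rw [aux_total_sum p m hm]
    _ = _ := by push_cast; ring
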